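/- For every partial computable integer-valued martingale m there is a pb-dense set of strings S such that every σ ∈ S satisfies m(σ') = m(σ) for every extension σ' of σ on which m is defined; consequently every pb-generic real has a prefix beyond which m never changes its capital. -/

import Mathlib

namespace IVR

/-! ### Finite binary strings and infinite binary sequences -/

/-- The length-`n` prefix of an infinite binary sequence `X`, as a finite binary string. -/
def str (X : ℕ → Bool) (n : ℕ) : List Bool := (List.range n).map X

/-- A standard encoding of the rationals into the natural numbers
(used to express computability of rational-valued functions). -/
def qenc (q : ℚ) : ℕ := Nat.pair (Encodable.encode q.num) q.den

/-! ### Martingales -/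

/-- A (total) martingale: a nonnegative function on binary strings satisfying
the fairness condition `f σ = (f (σ0) + f (σ1))/2`. -/
structure Martingale where
  toFun : List Bool → ℚ
  nonneg : ∀ σ, 0 ≤ toFun σ
  fair : ∀ σ : List Bool, toFun σ = (toFun (σ ++ [false]) + toFun (σ ++ [true])) / 2

/-- A martingale is integer-valued if each bet is an integer amount:
`f (σi) = f σ ± k` for some natural number `k`. -/
def Martingale.IntegerValued (f : Martingale) : Prop :=
  ∀ σ b, ∃ k : ℕ, f.toFun (σ ++ [b]) = f.toFun σ + k ∨ f.toFun (σ ++ [b]) = f.toFun σ - k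

/-- Computability of a martingale. -/
def Martingale.Comp (f : Martingale) : Prop := Computable fun σ => qenc (f.toFun σ)

/-- A martingale succeeds on `X` if `limsup_n f (X↾n) = ∞`. -/
def Martingale.Succeeds (f : Martingale) (X : ℕ → Bool) : Prop :=
  ∀ c : ℚ, ∀ m : ℕ, ∃ n, m ≤ n ∧ c < f.toFun (str X n)

/-- `X` is integer-valued random if no computable integer-valued martingale succeeds on it. -/
def IVRandom (X : ℕ → Bool) : Prop :=
  ∀ f : Martingale, f.IntegerValued → f.Comp → ¬ f.Succeeds X

/-- A partial martingale: a partial function on binary strings whose domain is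
closed under prefixes and which satisfies the fairness condition wherever defined. -/
structure PartialMartingale where
  toFun : List Bool →. ℚ
  nonneg : ∀ σ q, q ∈ toFun σ → 0 ≤ q
  domClosed : ∀ σ τ : List Bool, σ <+: τ → (toFun τ).Dom → (toFun σ).Dom
  siblings : ∀ σ b, (toFun (σ ++ [b])).Dom → (toFun (σ ++ [!b])).Dom
  fair : ∀ σ q0 q1, q0 ∈ toFun (σ ++ [false]) → q1 ∈ toFun (σ ++ [true]) →
    ((q0 + q1) / 2) ∈ toFun σ

/-- A partial martingale is integer-valued if each bet is an integer amount. -/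
def PartialMartingale.IntegerValued (m : PartialMartingale) : Prop :=
  ∀ σ b q q', q ∈ m.toFun σ → q' ∈ m.toFun (σ ++ [b]) →
    ∃ k : ℕ, q' = q + k ∨ q' = q - k

/-- Partial computability of a partial martingale. -/
def PartialMartingale.Comp (m : PartialMartingale) : Prop :=
  Partrec fun σ => (m.toFun σ).map qenc

/-- A partial martingale succeeds on `X` if `limsup_n m (X↾n) = ∞`. -/
def PartialMartingale.Succeeds (m : PartialMartingale) (X : ℕ → Bool) : Prop :=
  ∀ c : ℚ, ∀ k : ℕ, ∃ n, k ≤ n ∧ ∃ q ∈ m.toFun (str X n), c < q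

/-- `X` is partial integer-valued random if no partial computable integer-valued
martingale succeeds on it. -/
def PartialIVRandom (X : ℕ → Bool) : Prop :=
  ∀ m : PartialMartingale, m.IntegerValued → m.Comp → ¬ m.Succeeds X

/-! ### Oracle computability, Turing reducibility, the jump -/

/-- Codes for partial functions computable relative to an oracle
(Kleene-style, following `Nat.Partrec.Code` with an extra `oracle` constructor). -/
inductive OCode : Type
  | zero
  | succ
  | left
  | right
  | oracle
  | pair (cf cg : OCode)
  | comp (cf cg : OCode)
  | prec (cf cg : OCode)
  | rfind' (cf : OCode)

/-- Evaluation of an oracle code relative to a (partial) oracle `O`. -/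
def OCode.eval (O : ℕ →. ℕ) : OCode → ℕ →. ℕ
  | .zero => fun _ => Part.some 0
  | .succ => fun n => Part.some (n + 1)
  | .left => fun n => Part.some n.unpair.1
  | .right => fun n => Part.some n.unpair.2
  | .oracle => O
  | .pair cf cg => fun n => Nat.pair <$> OCode.eval O cf n <*> OCode.eval O cg n
  | .comp cf cg => fun n => OCode.eval O cg n >>= OCode.eval O cf
  | .prec cf cg =>
    Nat.unpaired fun a n =>
      n.rec (OCode.eval O cf a) fun y IH => do
        let i ← IH
        OCode.eval O cg (Nat.pair a (Nat.pair y i))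
  | .rfind' cf =>
    Nat.unpaired fun a m =>
      (Nat.rfind fun n => (fun x => x = 0) <$> OCode.eval O cf (Nat.pair a (n + m))).map (· + m)

/-- A numbering of the oracle codes. -/
def OCode.ofNat : ℕ → OCode
  | 0 => .zero
  | 1 => .succ
  | 2 => .left
  | 3 => .right
  | 4 => .oracle
  | n + 5 =>
    let m := n.div2.div2
    have hm : m < n + 5 := by
      simp only [m, Nat.div2_val]
      exact lt_of_le_of_lt (le_trans (Nat.div_le_self _ _) (Nat.div_le_self _ _)) (by omega)
    have _m1 : m.unpair.1 < n + 5 := lt_of_le_of_lt m.unpair_left_le hm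
    have _m2 : m.unpair.2 < n + 5 := lt_of_le_of_lt m.unpair_right_le hm
    match n.bodd, n.div2.bodd with
    | false, false => .pair (OCode.ofNat m.unpair.1) (OCode.ofNat m.unpair.2)
    | false, true  => .comp (OCode.ofNat m.unpair.1) (OCode.ofNat m.unpair.2)
    | true , false => .prec (OCode.ofNat m.unpair.1) (OCode.ofNat m.unpair.2)
    | true , true  => .rfind' (OCode.ofNat m)
decreasing_by
  all_goals
    have h1 := Nat.unpair_left_le (n.div2.div2)
    have h2 := Nat.unpair_right_le (n.div2.div2)
    have h3 : n.div2.div2 ≤ n := by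
      simp only [Nat.div2_val]
      exact le_trans (Nat.div_le_self _ _) (Nat.div_le_self _ _)
    simp_wf
    omega

/-- The characteristic function of a set of naturals / infinite binary sequence. -/
def charFn (A : ℕ → Bool) : ℕ →. ℕ := fun n => Part.some (cond (A n) 1 0)

/-- `f` is partial computable relative to the oracle `O`. -/
def RecIn (f : ℕ →. ℕ) (O : ℕ →. ℕ) : Prop := ∃ c : OCode, OCode.eval O c = f

/-- Turing reducibility. -/
def TLE (A B : ℕ → Bool) : Prop := RecIn (charFn A) (charFn B)

/-- Turing equivalence. -/
def TEquiv (A B : ℕ → Bool) : Prop := TLE A B ∧ TLE B A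

/-- A function `g : ℕ → ℕ` is computable from `A`. -/
def FnTLE (g : ℕ → ℕ) (A : ℕ → Bool) : Prop := RecIn (fun n => Part.some (g n)) (charFn A)

/-- The Turing jump of `A`: the halting problem relative to `A`. -/
noncomputable def jump (A : ℕ → Bool) : ℕ → Bool := fun e =>
  @decide ((OCode.eval (charFn A) (OCode.ofNat e) e).Dom) (Classical.propDecidable _)

/-- The empty set. -/
def emptySet : ℕ → Bool := fun _ => false

/-- The halting problem `∅'`. -/
noncomputable def K : ℕ → Bool := jump emptySet

/-- `∅''`. -/
noncomputable def K2 : ℕ → Bool := jump K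

/-- `∅'''`. -/
noncomputable def K3 : ℕ → Bool := jump K2

/-- Weak truth table reducibility: `A` is Turing reducible to `B` via a reduction
whose use is bounded by a computable function `u` -- the computation on input `n`
only depends on the first `u n` bits of the oracle. -/
def WttLE (A B : ℕ → Bool) : Prop :=
  ∃ (c : OCode) (u : ℕ → ℕ), Computable u ∧
    ∀ (n : ℕ) (B' : ℕ → Bool), (∀ k < u n, B' k = B k) →
      OCode.eval (charFn B') c n = Part.some (cond (A n) 1 0)

/-- Weak truth table equivalence. -/
def WttEquiv (A B : ℕ → Bool) : Prop := WttLE A B ∧ WttLE B A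

/-- Weak truth table reducibility of a function `f : ℕ → ℕ` to a set `B`. -/
def FnWttLE (f : ℕ → ℕ) (B : ℕ → Bool) : Prop :=
  ∃ (c : OCode) (u : ℕ → ℕ), Computable u ∧
    ∀ (n : ℕ) (B' : ℕ → Bool), (∀ k < u n, B' k = B k) →
      OCode.eval (charFn B') c n = Part.some (f n)

/-- `A` has array noncomputable Turing degree: for every `f ≤wtt ∅'` there is an
`A`-computable function `g` with `g n > f n` for infinitely many `n`. -/
def ArrayNoncomputable (A : ℕ → Bool) : Prop :=
  ∀ f : ℕ → ℕ, FnWttLE f K → ∃ g : ℕ → ℕ, FnTLE g A ∧ ∀ m, ∃ n, m ≤ n ∧ f n < g n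

/-- `A` is computably enumerable. -/
def CE (A : ℕ → Bool) : Prop :=
  ∃ f : ℕ →. ℕ, Nat.Partrec f ∧ ∀ n, A n = true ↔ (f n).Dom

/-- `S` is computably enumerable relative to `O`. -/
def CEIn (S : ℕ → Bool) (O : ℕ → Bool) : Prop :=
  ∃ f : ℕ →. ℕ, RecIn f (charFn O) ∧ ∀ n, S n = true ↔ (f n).Dom

/-- `A` has high Turing degree: the jump of `A` computes `∅''`. -/
def High (A : ℕ → Bool) : Prop := TLE K2 (jump A)

/-- `A` has high₂ Turing degree: the double jump of `A` computes `∅'''`. -/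
def High2 (A : ℕ → Bool) : Prop := TLE K3 (jump (jump A))

/-- `A` has low Turing degree: the jump of `A` is Turing equivalent to `∅'`. -/
def Low (A : ℕ → Bool) : Prop := TEquiv (jump A) K

/-! ### Left-c.e. reals -/

/-- The real number with binary expansion `X`. -/
noncomputable def binaryVal (X : ℕ → Bool) : ℝ :=
  ∑' n, cond (X n) ((2 : ℝ)⁻¹ ^ (n + 1)) 0

/-- `X` is a left-c.e. real: the limit of a computable increasing sequence of rationals. -/
def LeftCE (X : ℕ → Bool) : Prop :=
  ∃ q : ℕ → ℚ, Computable (fun n => qenc (q n)) ∧ (∀ n, q n ≤ q (n + 1)) ∧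
    Filter.Tendsto (fun n => (q n : ℝ)) Filter.atTop (nhds (binaryVal X))

/-! ### Genericity -/

/-- A set of strings `S` is pb-dense: it contains the range of a function
`f` with `f σ ⊒ σ` which has a computable approximation whose number of
mind-changes on `σ` is bounded by a primitive recursive function `h`. -/
def PbDense (S : Set (List Bool)) : Prop :=
  ∃ (f : List Bool → List Bool) (F : ℕ → List Bool → List Bool) (h : List Bool → ℕ),
    Computable₂ F ∧ Primrec h ∧
    (∀ σ, σ <+: f σ) ∧
    (∀ σ, ∃ s₀, ∀ s, s₀ ≤ s → F s σ = f σ) ∧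
    (∀ σ, {s : ℕ | F (s + 1) σ ≠ F s σ}.Finite ∧
      {s : ℕ | F (s + 1) σ ≠ F s σ}.ncard ≤ h σ) ∧
    (∀ σ, f σ ∈ S)

/-- `X` is pb-generic: it has a prefix in every pb-dense set of strings. -/
def PbGeneric (X : ℕ → Bool) : Prop :=
  ∀ S : Set (List Bool), PbDense S → ∃ n, str X n ∈ S

/-- A computably enumerable set of strings. -/
def CEStrings (W : Set (List Bool)) : Prop :=
  ∃ f : List Bool →. ℕ, Partrec f ∧ ∀ σ, σ ∈ W ↔ (f σ).Dom

/-- `X` is 1-generic: for every c.e. set of strings `W`, either `X` has a prefix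
in `W`, or `X` has a prefix no extension of which lies in `W`. -/
def OneGeneric (X : ℕ → Bool) : Prop :=
  ∀ W : Set (List Bool), CEStrings W →
    (∃ n, str X n ∈ W) ∨ (∃ n, ∀ τ : List Bool, str X n <+: τ → τ ∉ W)


/-! ### Auxiliary construction for Statement 1 -/

open Nat.Partrec (Code)

def dnum (k : ℕ) : ℕ := k.unpair.1 / 2

def ltq (k' k : ℕ) : Bool := decide (dnum k' * k.unpair.2 < dnum k * k'.unpair.2)

def Vv (c : Code) (s : ℕ) (σ : List Bool) : Option ℕ :=
  Nat.Partrec.Code.evaln s c (Encodable.encode σ)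

def tryOne (c : Code) (s : ℕ) (τ : List Bool) (k i : ℕ) : Option (List Bool) :=
  (Encodable.decode i : Option (List Bool)).bind fun ρ =>
    (Vv c (s + 1) (τ ++ ρ)).bind fun k' =>
      cond (ltq k' k) (some (τ ++ ρ)) none

def pick (c : Code) (s : ℕ) (τ : List Bool) (k : ℕ) : Option (List Bool) :=
  ((List.range (s + 1)).filterMap (tryOne c s τ k)).head?

def stepc (c : Code) (s : ℕ) (τ : List Bool) : List Bool :=
  ((Vv c (s + 1) τ).bind fun k => pick c s τ k).getD τ

def cand (c : Code) (σ : List Bool) : ℕ → List Bool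
  | 0 => σ
  | s + 1 => stepc c s (cand c σ s)

lemma encode_int_nonneg (n : ℕ) : Encodable.encode (n : ℤ) = 2 * n := rfl

lemma dnum_qenc {q : ℚ} (h : 0 ≤ q) : dnum (qenc q) = q.num.toNat := by
  have h1 : (q.num.toNat : ℤ) = q.num := Int.toNat_of_nonneg (Rat.num_nonneg.2 h)
  have h2 : Encodable.encode q.num = 2 * q.num.toNat := by rw [← h1]; rfl
  simp [dnum, qenc, Nat.unpair_pair, h2]

lemma den_qenc (q : ℚ) : (qenc q).unpair.2 = q.den := by simp [qenc, Nat.unpair_pair]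

lemma ltq_iff {q' q : ℚ} (h' : 0 ≤ q') (h : 0 ≤ q) :
    (ltq (qenc q') (qenc q) = true) ↔ q' < q := by
  have h1 : (q'.num.toNat : ℤ) = q'.num := Int.toNat_of_nonneg (Rat.num_nonneg.2 h')
  have h2 : (q.num.toNat : ℤ) = q.num := Int.toNat_of_nonneg (Rat.num_nonneg.2 h)
  rw [ltq, decide_eq_true_iff, dnum_qenc h', dnum_qenc h, den_qenc, den_qenc,
    Rat.lt_iff, ← Nat.cast_lt (α := ℤ)]
  push_cast [h1, h2]
  exact Iff.rfl

lemma ltq_irrefl (k : ℕ) : ltq k k = false := by simp [ltq]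

lemma pick_sound {c : Code} {s : ℕ} {τ : List Bool} {k : ℕ} {x : List Bool}
    (hp : pick c s τ k = some x) :
    ∃ ρ k', x = τ ++ ρ ∧ Vv c (s + 1) (τ ++ ρ) = some k' ∧ ltq k' k = true := by
  have hx : x ∈ (List.range (s + 1)).filterMap (tryOne c s τ k) :=
    List.mem_of_mem_head? (Option.mem_def.2 hp)
  obtain ⟨i, -, hi⟩ := List.mem_filterMap.1 hx
  rw [tryOne] at hi
  obtain ⟨ρ, hρdec, hi2⟩ := Option.bind_eq_some_iff.1 hi
  obtain ⟨k', hk', hi3⟩ := Option.bind_eq_some_iff.1 hi2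
  cases hb : ltq k' k
  · rw [hb] at hi3; simp at hi3
  · rw [hb] at hi3; simp only [cond_true, Option.some.injEq] at hi3
    exact ⟨ρ, k', hi3.symm, hk', hb⟩

lemma stepc_eq_of_pick {c : Code} {s : ℕ} {τ : List Bool} {k : ℕ} {x : List Bool}
    (hV : Vv c (s + 1) τ = some k) (hp : pick c s τ k = some x) : stepc c s τ = x := by
  simp [stepc, hV, hp]

lemma stepc_cases (c : Code) (s : ℕ) (τ : List Bool) :
    stepc c s τ = τ ∨
    ∃ k k' ρ, Vv c (s + 1) τ = some k ∧ stepc c s τ = τ ++ ρ ∧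
      Vv c (s + 1) (τ ++ ρ) = some k' ∧ ltq k' k = true := by
  rcases hV : Vv c (s + 1) τ with _ | k
  · left; simp [stepc, hV]
  rcases hp : pick c s τ k with _ | x
  · left; simp [stepc, hV, hp]
  · obtain ⟨ρ, k', hx, hVk', hlt⟩ := pick_sound hp
    exact Or.inr ⟨k, k', ρ, rfl, by rw [stepc_eq_of_pick hV hp, hx], hVk', hlt⟩

lemma stepc_ne (c : Code) (s : ℕ) (τ ρ : List Bool) (k k' : ℕ)
    (hρ : Encodable.encode ρ ≤ s) (hτ : Vv c (s + 1) τ = some k)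
    (hρV : Vv c (s + 1) (τ ++ ρ) = some k') (hlt : ltq k' k = true) :
    stepc c s τ ≠ τ := by
  have hmem : τ ++ ρ ∈ (List.range (s + 1)).filterMap (tryOne c s τ k) :=
    List.mem_filterMap.2 ⟨Encodable.encode ρ, List.mem_range.2 (by omega), by
      simp [tryOne, Encodable.encodek, hρV, hlt]⟩
  rcases hp : pick c s τ k with _ | x
  · rw [pick] at hp
    exact absurd (List.head?_eq_none_iff.1 hp) (List.ne_nil_of_mem hmem)
  · obtain ⟨ρ', k'', hx, hVk'', hlt''⟩ := pick_sound hp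
    rw [stepc_eq_of_pick hτ hp]
    intro hxx
    have hρ'nil : ρ' = [] := by
      have : τ ++ ρ' = τ := by rw [← hx, hxx]
      simpa using this
    rw [hρ'nil, List.append_nil, hτ, Option.some.injEq] at hVk''
    rw [hVk'', ltq_irrefl] at hlt''
    cases hlt''

lemma vv_prim (c : Code) : Primrec₂ (Vv c) :=
  Nat.Partrec.Code.primrec_evaln.comp
    ((Primrec.fst.pair (Primrec.const c)).pair (Primrec.encode.comp Primrec.snd))

lemma dnum_prim : Primrec dnum :=
  Primrec.nat_div.comp (Primrec.fst.comp Primrec.unpair) (Primrec.const 2)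

lemma ltq_prim : Primrec₂ ltq :=
  PrimrecPred.decide <| Primrec.nat_lt.comp
    (Primrec.nat_mul.comp (dnum_prim.comp Primrec.fst)
      ((Primrec.snd.comp Primrec.unpair).comp Primrec.snd))
    (Primrec.nat_mul.comp (dnum_prim.comp Primrec.snd)
      ((Primrec.snd.comp Primrec.unpair).comp Primrec.fst))

lemma tryOne_prim (c : Code) :
    Primrec₂ fun (a : (ℕ × List Bool) × ℕ) (i : ℕ) => tryOne c a.1.1 a.1.2 a.2 i := by
  have hs : Primrec fun (b : ((ℕ × List Bool) × ℕ) × ℕ) => b.1.1.1 :=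
    Primrec.fst.comp (Primrec.fst.comp Primrec.fst)
  have hτ : Primrec fun (b : ((ℕ × List Bool) × ℕ) × ℕ) => b.1.1.2 :=
    Primrec.snd.comp (Primrec.fst.comp Primrec.fst)
  have hk : Primrec fun (b : ((ℕ × List Bool) × ℕ) × ℕ) => b.1.2 :=
    Primrec.snd.comp Primrec.fst
  refine Primrec.option_bind (Primrec.decode.comp Primrec.snd) ?_
  have hs' : Primrec fun (p : (((ℕ × List Bool) × ℕ) × ℕ) × List Bool) => p.1.1.1.1 :=
    hs.comp Primrec.fst
  have hτρ : Primrec fun (p : (((ℕ × List Bool) × ℕ) × ℕ) × List Bool) => p.1.1.1.2 ++ p.2 :=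
    Primrec.list_append.comp (hτ.comp Primrec.fst) Primrec.snd
  have hk' : Primrec fun (p : (((ℕ × List Bool) × ℕ) × ℕ) × List Bool) => p.1.1.2 :=
    hk.comp Primrec.fst
  have hV : Primrec fun (p : (((ℕ × List Bool) × ℕ) × ℕ) × List Bool) =>
      Vv c (p.1.1.1.1 + 1) (p.1.1.1.2 ++ p.2) :=
    (vv_prim c).comp (Primrec.succ.comp hs') hτρ
  refine Primrec.option_bind hV ?_
  exact (Primrec.cond (ltq_prim.comp Primrec.snd (hk'.comp Primrec.fst))
    (Primrec.option_some.comp (hτρ.comp Primrec.fst)) (Primrec.const none)).to₂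

lemma stepc_prim (c : Code) : Primrec₂ (stepc c) := by
  have hVp : Primrec fun (p : ℕ × List Bool) => Vv c (p.1 + 1) p.2 :=
    (vv_prim c).comp (Primrec.succ.comp Primrec.fst) Primrec.snd
  have hpick : Primrec₂ fun (p : ℕ × List Bool) (k : ℕ) => pick c p.1 p.2 k := by
    refine Primrec.list_head?.comp ?_
    exact Primrec.listFilterMap
      (Primrec.list_range.comp (Primrec.succ.comp (Primrec.fst.comp Primrec.fst)))
      (tryOne_prim c)
  exact Primrec.option_getD.comp
    (Primrec.option_bind hVp hpick) Primrec.snd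

lemma cand_comp (c : Code) : Computable₂ fun (s : ℕ) (σ : List Bool) => cand c σ s := by
  have hh : Computable₂ fun (_ : ℕ × List Bool) (q : ℕ × List Bool) => stepc c q.1 q.2 :=
    ((stepc_prim c).to_comp.comp (Computable.fst.comp Computable.snd)
      (Computable.snd.comp Computable.snd)).to₂
  have h := Computable.nat_rec (f := fun p : ℕ × List Bool => p.1)
    (g := fun p : ℕ × List Bool => p.2)
    (h := fun (_ : ℕ × List Bool) (q : ℕ × List Bool) => stepc c q.1 q.2)
    Computable.fst Computable.snd hh
  refine Computable.of_eq h ?_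
  rintro ⟨s, σ⟩
  induction s with
  | zero => rfl
  | succ s ih => simpa [cand] using congrArg (stepc c s) (by simpa using ih)



/-- For every partial computable integer-valued martingale `m` there
is a pb-dense set of strings `S` such that `m` never changes its capital above any
string of `S`; consequently every pb-generic real has a prefix beyond which `m`
never changes its capital. -/
theorem exists_pbDense_conservation (m : PartialMartingale)
    (hiv : m.IntegerValued) (hc : m.Comp) :
    (∃ S : Set (List Bool), PbDense S ∧
      ∀ σ ∈ S, ∀ τ : List Bool, σ <+: τ →
        ∀ q q' : ℚ, q ∈ m.toFun σ → q' ∈ m.toFun τ → q' = q) ∧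
    (∀ X : ℕ → Bool, PbGeneric X → ∃ n, ∀ τ : List Bool, str X n <+: τ →
      ∀ q q' : ℚ, q ∈ m.toFun (str X n) → q' ∈ m.toFun τ → q' = q) := by
  classical
  obtain ⟨c, hcc⟩ := Nat.Partrec.Code.exists_code.1 hc
  have hVs : ∀ s σ k, Vv c s σ = some k → ∃ q ∈ m.toFun σ, qenc q = k := by
    intro s σ k hk
    have h1 : k ∈ Nat.Partrec.Code.eval c (Encodable.encode σ) :=
      Nat.Partrec.Code.evaln_sound (Option.mem_def.2 hk)
    rw [hcc] at h1
    simp only [Part.mem_bind_iff, Part.mem_coe, Option.mem_def, Encodable.encodek,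
      Option.some.injEq, Part.mem_map_iff, Encodable.encode_nat] at h1
    obtain ⟨a, rfl, a1, ⟨q, hq, hqk⟩, rfl⟩ := h1
    exact ⟨q, hq, hqk⟩
  have hVc : ∀ σ (q : ℚ), q ∈ m.toFun σ → ∃ s, Vv c s σ = some (qenc q) := by
    intro σ q hq
    have h1 : qenc q ∈ Nat.Partrec.Code.eval c (Encodable.encode σ) := by
      rw [hcc]
      simp only [Part.mem_bind_iff, Part.mem_coe, Option.mem_def, Encodable.encodek,
        Option.some.injEq, Part.mem_map_iff, Encodable.encode_nat]
      exact ⟨σ, rfl, qenc q, ⟨q, hq, rfl⟩, rfl⟩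
    obtain ⟨s, hs⟩ := Nat.Partrec.Code.evaln_complete.1 h1
    exact ⟨s, Option.mem_def.1 hs⟩
  have hVmono : ∀ {s s' : ℕ} {σ : List Bool} {k : ℕ}, s ≤ s' →
      Vv c s σ = some k → Vv c s' σ = some k := by
    intro s s' σ k h hk
    exact Option.mem_def.1 (Nat.Partrec.Code.evaln_mono h (Option.mem_def.2 hk))
  have hnn : ∀ σ (q : ℚ), q ∈ m.toFun σ → 0 ≤ q := m.nonneg
  -- integer differences
  have hint : ∀ τ ρ (q q' : ℚ), q ∈ m.toFun τ → q' ∈ m.toFun (τ ++ ρ) →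
      ∃ z : ℤ, q' = q + z := by
    intro τ ρ
    induction ρ using List.reverseRecOn with
    | nil =>
      intro q q' hq hq'
      rw [List.append_nil] at hq'
      exact ⟨0, by rw [Part.mem_unique hq' hq]; simp⟩
    | append_singleton ρ₀ b ih =>
      intro q q' hq hq'
      rw [← List.append_assoc] at hq'
      have hdom : (m.toFun (τ ++ ρ₀)).Dom :=
        m.domClosed _ _ (List.prefix_append _ _) (Part.dom_iff_mem.2 ⟨q', hq'⟩)
      have hqm : (m.toFun (τ ++ ρ₀)).get hdom ∈ m.toFun (τ ++ ρ₀) := Part.get_mem hdom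
      obtain ⟨z, hz⟩ := ih q _ hq hqm
      obtain ⟨kk, hk | hk⟩ := hiv (τ ++ ρ₀) b _ q' hqm hq'
      · exact ⟨z + kk, by rw [hk, hz]; push_cast; ring⟩
      · exact ⟨z - kk, by rw [hk, hz]; push_cast; ring⟩
  -- value bound
  set Q0 : ℚ := if h : (m.toFun []).Dom then (m.toFun []).get h else 0 with hQ0
  have hQ0nn : 0 ≤ Q0 := by
    rw [hQ0]; split
    · exact m.nonneg _ _ (Part.get_mem _)
    · exact le_refl _
  have hbd : ∀ σ (q : ℚ), q ∈ m.toFun σ → q ≤ Q0 * 2 ^ σ.length := by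
    intro σ
    induction σ using List.reverseRecOn with
    | nil =>
      intro q hq
      have hd : (m.toFun []).Dom := Part.dom_iff_mem.2 ⟨q, hq⟩
      have : Q0 = q := by rw [hQ0, dif_pos hd]; exact Part.get_eq_of_mem hq hd
      simp [this]
    | append_singleton ρ b ih =>
      intro q hq
      have hdomb : (m.toFun (ρ ++ [b])).Dom := Part.dom_iff_mem.2 ⟨q, hq⟩
      have hdomnb := m.siblings ρ b hdomb
      have hlen : (ρ ++ [b]).length = ρ.length + 1 := by simp
      rw [hlen]
      cases b with
      | false =>
        have h2 : (m.toFun (ρ ++ [true])).Dom := by simpa using hdomnb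
        have hq2 := Part.get_mem h2
        have hfair := m.fair ρ q _ hq hq2
        have h3 := ih _ hfair
        have h4 : (0:ℚ) ≤ (m.toFun (ρ ++ [true])).get h2 := m.nonneg _ _ hq2
        have h5 : (0:ℚ) < 2 ^ ρ.length := by positivity
        rw [pow_succ]; nlinarith
      | true =>
        have h2 : (m.toFun (ρ ++ [false])).Dom := by simpa using hdomnb
        have hq2 := Part.get_mem h2
        have hfair := m.fair ρ _ q hq2 hq
        have h3 := ih _ hfair
        have h4 : (0:ℚ) ≤ (m.toFun (ρ ++ [false])).get h2 := m.nonneg _ _ hq2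
        have h5 : (0:ℚ) < 2 ^ ρ.length := by positivity
        rw [pow_succ]; nlinarith
  -- change analysis
  have hchange : ∀ σ s, cand c σ (s + 1) ≠ cand c σ s →
      ∃ q q', q ∈ m.toFun (cand c σ s) ∧ q' ∈ m.toFun (cand c σ (s + 1)) ∧ q' ≤ q - 1 := by
    intro σ s hne
    rcases stepc_cases c s (cand c σ s) with h | ⟨k, k', ρ, hVk, hstep, hVk', hlt⟩
    · exact absurd h hne
    · obtain ⟨q, hq, hqe⟩ := hVs _ _ _ hVk
      obtain ⟨q', hq', hqe'⟩ := hVs _ _ _ hVk'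
      rw [← hqe, ← hqe'] at hlt
      have hlt' : q' < q := (ltq_iff (hnn _ _ hq') (hnn _ _ hq)).1 hlt
      obtain ⟨z, hz⟩ := hint _ ρ q q' hq hq'
      have hz1 : z ≤ -1 := by
        by_contra hzc
        push_neg at hzc
        have : (0:ℚ) ≤ (z:ℚ) := by exact_mod_cast (by omega : (0:ℤ) ≤ z)
        linarith [hz]
      have hzq : (z:ℚ) ≤ -1 := by exact_mod_cast hz1
      refine ⟨q, q', hq, ?_, by rw [hz]; linarith⟩
      show q' ∈ m.toFun (cand c σ (s + 1))
      have : cand c σ (s + 1) = cand c σ s ++ ρ := hstep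
      rw [this]; exact hq'
  have hpref1 : ∀ σ s, cand c σ s <+: cand c σ (s + 1) := by
    intro σ s
    rcases stepc_cases c s (cand c σ s) with h | ⟨k, k', ρ, _, hstep, _, _⟩
    · rw [show cand c σ (s+1) = stepc c s (cand c σ s) from rfl, h]
    · rw [show cand c σ (s+1) = stepc c s (cand c σ s) from rfl, hstep]
      exact List.prefix_append _ _
  have hpref : ∀ σ s s', s ≤ s' → cand c σ s <+: cand c σ s' := by
    intro σ s s' h
    induction s', h using Nat.le_induction with
    | base => exact List.prefix_refl _
    | succ s' hs ih => exact ih.trans (hpref1 σ s')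
  have hnodom : ∀ σ, ¬ (m.toFun σ).Dom → ∀ s, cand c σ s = σ := by
    intro σ hσ s
    induction s with
    | zero => rfl
    | succ s ih =>
      rcases stepc_cases c s (cand c σ s) with h | ⟨k, _, _, hVk, _, _, _⟩
      · rw [show cand c σ (s+1) = stepc c s (cand c σ s) from rfl, h, ih]
      · obtain ⟨q, hq, -⟩ := hVs _ _ _ hVk
        rw [ih] at hq
        exact absurd (Part.dom_iff_mem.2 ⟨q, hq⟩) hσ
  -- mind-change counting
  set ncf : List Bool → ℕ → ℕ := fun σ s =>
    ((Finset.range s).filter (fun t => cand c σ (t + 1) ≠ cand c σ t)).card with hncf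
  have hnc_succ : ∀ σ s, ncf σ (s + 1) =
      if cand c σ (s + 1) ≠ cand c σ s then ncf σ s + 1 else ncf σ s := by
    intro σ s
    rw [hncf]
    simp only [Finset.range_add_one, Finset.filter_insert]
    split
    · rw [Finset.card_insert_of_notMem fun hmem =>
        absurd (Finset.mem_range.1 (Finset.filter_subset _ _ hmem)) (lt_irrefl s)]
    · rfl
  have hinvar : ∀ σ, (m.toFun σ).Dom → ∀ s, ∃ q, q ∈ m.toFun (cand c σ s) ∧
      (ncf σ s : ℚ) + q ≤ Q0 * 2 ^ σ.length := by
    intro σ hσ s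
    induction s with
    | zero =>
      exact ⟨(m.toFun σ).get hσ, Part.get_mem hσ, by
        simpa [hncf] using hbd σ _ (Part.get_mem hσ)⟩
    | succ s ih =>
      obtain ⟨q, hq, hqb⟩ := ih
      by_cases h : cand c σ (s + 1) = cand c σ s
      · refine ⟨q, by rw [h]; exact hq, ?_⟩
        rw [hnc_succ, if_neg (by simpa using h)]
        exact hqb
      · obtain ⟨q1, q', hq1, hq', hle⟩ := hchange σ s h
        have : q1 = q := Part.mem_unique hq1 hq
        rw [this] at hle
        refine ⟨q', hq', ?_⟩
        rw [hnc_succ, if_pos h]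
        push_cast
        linarith
  set C : ℕ := ⌈Q0⌉₊ with hC
  set B : List Bool → ℕ := fun σ => C * 2 ^ σ.length with hBdef
  have hncB : ∀ σ s, ncf σ s ≤ B σ := by
    intro σ s
    have hq : (ncf σ s : ℚ) ≤ ((B σ : ℕ) : ℚ) := by
      have h2 : Q0 * 2 ^ σ.length ≤ (C:ℚ) * 2 ^ σ.length := by
        have := Nat.le_ceil Q0
        have h5 : (0:ℚ) ≤ 2 ^ σ.length := by positivity
        nlinarith
      by_cases hσ : (m.toFun σ).Dom
      · obtain ⟨q, hqm, hqb⟩ := hinvar σ hσ s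
        have := hnn _ _ hqm
        have hB : ((B σ : ℕ) : ℚ) = (C:ℚ) * 2 ^ σ.length := by
          rw [hBdef]; push_cast; ring
        rw [hB]; linarith
      · have : ncf σ s = 0 := by
          rw [hncf]
          simp only [Finset.card_eq_zero, Finset.filter_eq_empty_iff]
          intro t _
          simp [hnodom σ hσ]
        rw [this]
        positivity
    exact_mod_cast hq
  have hchangeset : ∀ σ, {s : ℕ | cand c σ (s + 1) ≠ cand c σ s}.Finite ∧
      {s : ℕ | cand c σ (s + 1) ≠ cand c σ s}.ncard ≤ B σ := by
    intro σ
    have hfinsub : ∀ t : Finset ℕ, (∀ x ∈ t, cand c σ (x + 1) ≠ cand c σ x) →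
        t.card ≤ B σ := by
      intro t ht
      have hsub : t ⊆ (Finset.range (t.sup id + 1)).filter
          (fun u => cand c σ (u + 1) ≠ cand c σ u) := by
        intro x hx
        exact Finset.mem_filter.2 ⟨Finset.mem_range.2
          (Nat.lt_succ_of_le (Finset.le_sup (f := id) hx)), ht x hx⟩
      calc t.card ≤ _ := Finset.card_le_card hsub
      _ = ncf σ (t.sup id + 1) := by rw [hncf]
      _ ≤ B σ := hncB σ _
    have hfin : {s : ℕ | cand c σ (s + 1) ≠ cand c σ s}.Finite := by
      by_contra hinf
      obtain ⟨t, hts, htf, htc⟩ := Set.Infinite.exists_subset_ncard_eq hinf (B σ + 1)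
      have h1 := hfinsub htf.toFinset (fun x hx => hts (htf.mem_toFinset.1 hx))
      rw [Set.ncard_eq_toFinset_card t htf] at htc
      omega
    refine ⟨hfin, ?_⟩
    have h1 := hfinsub hfin.toFinset (fun x hx => hfin.mem_toFinset.1 hx)
    rwa [← Set.ncard_eq_toFinset_card _ hfin] at h1
  -- stabilization
  have hstab : ∀ σ, ∃ N, ∀ s, N ≤ s → cand c σ s = cand c σ N := by
    intro σ
    obtain ⟨M, hM⟩ := (hchangeset σ).1.bddAbove
    refine ⟨M + 1, ?_⟩
    intro s hs
    induction s, hs using Nat.le_induction with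
    | base => rfl
    | succ s hs ih =>
      by_cases h : cand c σ (s + 1) = cand c σ s
      · rw [h, ih]
      · have : s ≤ M := hM h
        omega
  set f : List Bool → List Bool := fun σ => cand c σ (hstab σ).choose with hf
  -- limit minimality
  have hmin : ∀ σ τ (q₀ q' : ℚ), f σ <+: τ → q₀ ∈ m.toFun (f σ) → q' ∈ m.toFun τ →
      ¬ q' < q₀ := by
    intro σ τ q₀ q' hpfx hq₀ hq' hlt
    obtain ⟨ρ, hρ⟩ := hpfx
    obtain ⟨s1, hs1⟩ := hVc _ _ hq₀
    obtain ⟨s2, hs2⟩ := hVc _ _ hq'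
    set N := (hstab σ).choose with hN
    set s := N + s1 + s2 + Encodable.encode ρ with hsdef
    have hcN : cand c σ s = f σ := (hstab σ).choose_spec s (by omega)
    have hcN1 : cand c σ (s + 1) = f σ := (hstab σ).choose_spec (s + 1) (by omega)
    have hV1 : Vv c (s + 1) (f σ) = some (qenc q₀) := hVmono (by omega) hs1
    have hV2 : Vv c (s + 1) (f σ ++ ρ) = some (qenc q') := by
      rw [hρ]; exact hVmono (by omega) hs2
    have hltb : ltq (qenc q') (qenc q₀) = true := (ltq_iff (hnn _ _ hq') (hnn _ _ hq₀)).2 hlt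
    have hne := stepc_ne c s (f σ) ρ (qenc q₀) (qenc q') (by omega) hV1 hV2 hltb
    apply hne
    calc stepc c s (f σ) = stepc c s (cand c σ s) := by rw [hcN]
    _ = cand c σ (s + 1) := rfl
    _ = f σ := hcN1
  -- conservation above the limit
  have hcons : ∀ σ τ (q q' : ℚ), f σ <+: τ → q ∈ m.toFun (f σ) → q' ∈ m.toFun τ →
      q' = q := by
    intro σ τ q q' hpfx hq hq'
    obtain ⟨ρ, hρ⟩ := hpfx
    subst hρ
    induction ρ using List.reverseRecOn generalizing q' with
    | nil =>
      rw [List.append_nil] at hq'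
      exact Part.mem_unique hq' hq
    | append_singleton ρ₀ b ih =>
      rw [← List.append_assoc] at hq'
      have hdb : (m.toFun ((f σ ++ ρ₀) ++ [b])).Dom := Part.dom_iff_mem.2 ⟨q', hq'⟩
      have hdnb := m.siblings (f σ ++ ρ₀) b hdb
      have hbothf : (m.toFun ((f σ ++ ρ₀) ++ [false])).Dom := by
        cases b
        · exact hdb
        · simpa using hdnb
      have hbotht : (m.toFun ((f σ ++ ρ₀) ++ [true])).Dom := by
        cases b
        · simpa using hdnb
        · exact hdb
      have hqf := Part.get_mem hbothf
      have hqt := Part.get_mem hbotht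
      have hfair := m.fair (f σ ++ ρ₀) _ _ hqf hqt
      have hμ := ih _ hfair
      have hf1 : ¬ (m.toFun ((f σ ++ ρ₀) ++ [false])).get hbothf < q :=
        hmin σ _ q _ ⟨ρ₀ ++ [false], by rw [List.append_assoc]⟩ hq hqf
      have ht1 : ¬ (m.toFun ((f σ ++ ρ₀) ++ [true])).get hbotht < q :=
        hmin σ _ q _ ⟨ρ₀ ++ [true], by rw [List.append_assoc]⟩ hq hqt
      push_neg at hf1 ht1
      cases b
      · have : q' = (m.toFun ((f σ ++ ρ₀) ++ [false])).get hbothf :=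
          Part.mem_unique hq' hqf
        rw [this]; linarith
      · have : q' = (m.toFun ((f σ ++ ρ₀) ++ [true])).get hbotht :=
          Part.mem_unique hq' hqt
        rw [this]; linarith
  -- assembling
  have hBprim : Primrec B := by
    have hpow : Primrec₂ ((· ^ ·) : ℕ → ℕ → ℕ) := Primrec₂.unpaired'.1 Nat.Primrec.pow
    exact Primrec.nat_mul.comp (Primrec.const C)
      (hpow.comp (Primrec.const 2) Primrec.list_length)
  have main : ∃ S : Set (List Bool), PbDense S ∧
      ∀ σ ∈ S, ∀ τ : List Bool, σ <+: τ →
        ∀ q q' : ℚ, q ∈ m.toFun σ → q' ∈ m.toFun τ → q' = q := by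
    refine ⟨{σ₀ | ∀ τ : List Bool, σ₀ <+: τ →
        ∀ q q' : ℚ, q ∈ m.toFun σ₀ → q' ∈ m.toFun τ → q' = q},
      ⟨f, fun s σ => cand c σ s, B, cand_comp c, hBprim, ?_, ?_, ?_, ?_⟩, ?_⟩
    · intro σ
      exact hpref σ 0 _ (Nat.zero_le _)
    · intro σ
      exact ⟨(hstab σ).choose, fun s hs => (hstab σ).choose_spec s hs⟩
    · intro σ
      exact hchangeset σ
    · intro σ τ hτ q q' hq hq'
      exact hcons σ τ q q' hτ hq hq'
    · intro σ hσ τ hτ q q' hq hq'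
      exact hσ τ hτ q q' hq hq'
  refine ⟨main, ?_⟩
  intro X hX
  obtain ⟨S, hSd, hScons⟩ := main
  obtain ⟨n, hn⟩ := hX S hSd
  exact ⟨n, fun τ hτ q q' hq hq' => hScons _ hn τ hτ q q' hq hq'⟩

end IVR
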